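/- Let R be a Noetherian local ring, f_1, f_2, f ∈ m, J = (f_1, f_2), I = (f_1, f_2, f). Fix d ≥ 2 and assume (0 : f_1) ∩ I^{d-2} = 0 and (0 : f_1) ∩ I^{d-1} = 0. Then there is an exact sequence of R-modules: 0 → ((f_1·I^{d-1} : f_2) ∩ I^{d-1}) / (f·[(f_1·I^{d-2} : f_2) ∩ I^{d-2}] + f_1·I^{d-2}) → E(I)_d → (J·I^{d-1} : f^d)/(J·I^{d-2} : f^{d-1}) → 0. -/

import Mathlib

open Ideal Submodule

variable {R : Type*} [CommRing R]

/-- The linear map `(a₁,…,aₘ) ↦ Σ aⱼ zⱼ`. -/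
noncomputable def sumMul {m : ℕ} (z : Fin m → R) : (Fin m → R) →ₗ[R] R :=
  ∑ j, (LinearMap.proj j : (Fin m → R) →ₗ[R] R).smulRight (z j)

/-- The degree-`d` cycles of the Koszul complex of the degree-one elements
`z₁t,…,zₘt` on the Rees algebra of `I`. -/
noncomputable def kosZ1 {m : ℕ} (I : Ideal R) (z : Fin m → R) (d : ℕ) :
    Submodule R (Fin m → R) :=
  (⨅ j : Fin m, Submodule.comap (LinearMap.proj j) ((I ^ (d - 1) : Ideal R) : Submodule R R))
    ⊓ LinearMap.ker (sumMul z)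

/-- The degree-`d` boundaries of the Koszul complex of `z₁t,…,zₘt` on the Rees algebra
of `I`. -/
noncomputable def kosB1 {m : ℕ} (I : Ideal R) (z : Fin m → R) (d : ℕ) :
    Submodule R (Fin m → R) :=
  Submodule.span R {v | ∃ j l : Fin m, ∃ u ∈ I ^ (d - 2),
    v = Pi.single l (z j * u) - Pi.single j (z l * u)}

/-- The degree-`d` component of the first Koszul homology `H₁(z₁t,…,zₘt; R(I))`;
for the full sequence of generators of `I` this computes the `d`-th module of effective
relations `E(I)_d`. -/
noncomputable abbrev kosH1 {m : ℕ} (I : Ideal R) (z : Fin m → R) (d : ℕ) :=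
  ↥(kosZ1 I z d) ⧸ (Submodule.comap (kosZ1 I z d).subtype (kosB1 I z d))

/-- The quotient `A/B` of an ideal `A` by another ideal `B` (as `R`-modules). -/
noncomputable abbrev idealQuot {R : Type*} [CommRing R] (A B : Ideal R) :=
  ↥A ⧸ (Submodule.comap (Submodule.subtype (A : Submodule R R)) (B : Submodule R R))

section basic

lemma sumMul_apply {m : ℕ} (z v : Fin m → R) : sumMul z v = ∑ j, v j * z j := by
  simp [sumMul, LinearMap.sum_apply, smul_eq_mul]

/-- triples with entries in an ideal -/
noncomputable def cube (N : Ideal R) : Submodule R (Fin 3 → R) :=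
  ⨅ j : Fin 3, Submodule.comap (LinearMap.proj j) (N : Submodule R R)

lemma mem_cube {N : Ideal R} {v : Fin 3 → R} : v ∈ cube N ↔ ∀ j, v j ∈ N := by
  simp [cube, Submodule.mem_iInf]

lemma mem_kosZ1 {f1 f2 f : R} {I : Ideal R} {d : ℕ} {v : Fin 3 → R} :
    v ∈ kosZ1 I ![f1, f2, f] d ↔
      (∀ j, v j ∈ I ^ (d - 1)) ∧ v 0 * f1 + v 1 * f2 + v 2 * f = 0 := by
  simp [kosZ1, Submodule.mem_iInf, sumMul_apply, Fin.sum_univ_three, add_assoc]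

noncomputable def psi (f1 f2 f : R) : (Fin 3 → R) →ₗ[R] (Fin 3 → R) where
  toFun p := ![-(f2 * p 0) - f * p 1, f1 * p 0 - f * p 2, f1 * p 1 + f2 * p 2]
  map_add' p q := by
    funext i; fin_cases i <;> simp <;> ring
  map_smul' c p := by
    funext i; fin_cases i <;> simp <;> ring

lemma kosB1_eq (f1 f2 f : R) (I : Ideal R) (d : ℕ) :
    kosB1 I ![f1, f2, f] d = Submodule.map (psi f1 f2 f) (cube (I ^ (d - 2))) := by
  apply le_antisymm
  · rw [kosB1, Submodule.span_le]
    rintro v ⟨j, l, u, hu, rfl⟩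
    fin_cases j <;> fin_cases l
    · exact ⟨0, zero_mem _, by rw [map_zero, sub_self]⟩
    · refine ⟨![u, 0, 0], mem_cube.2 ?_, ?_⟩
      · intro j; fin_cases j <;> simp [hu]
      · funext i; fin_cases i <;> simp [psi, Pi.single, Matrix.cons_val_zero] <;> ring
    · refine ⟨![0, u, 0], mem_cube.2 ?_, ?_⟩
      · intro j; fin_cases j <;> simp [hu]
      · funext i; fin_cases i <;> simp [psi, Pi.single] <;> ring
    · refine ⟨![-u, 0, 0], mem_cube.2 ?_, ?_⟩
      · intro j; fin_cases j <;> simp <;> exact hu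
      · funext i; fin_cases i <;> simp [psi, Pi.single] <;> ring
    · exact ⟨0, zero_mem _, by rw [map_zero, sub_self]⟩
    · refine ⟨![0, 0, u], mem_cube.2 ?_, ?_⟩
      · intro j; fin_cases j <;> simp [hu]
      · funext i; fin_cases i <;> simp [psi, Pi.single] <;> ring
    · refine ⟨![0, -u, 0], mem_cube.2 ?_, ?_⟩
      · intro j; fin_cases j <;> simp <;> exact hu
      · funext i; fin_cases i <;> simp [psi, Pi.single] <;> ring
    · refine ⟨![0, 0, -u], mem_cube.2 ?_, ?_⟩
      · intro j; fin_cases j <;> simp <;> exact hu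
      · funext i; fin_cases i <;> simp [psi, Pi.single] <;> ring
    · exact ⟨0, zero_mem _, by rw [map_zero, sub_self]⟩
  · rintro v ⟨p, hp, rfl⟩
    replace hp := mem_cube.1 hp
    have g01 : (Pi.single 1 (f1 * p 0) - Pi.single 0 (f2 * p 0) : Fin 3 → R)
        ∈ kosB1 I ![f1, f2, f] d :=
      Submodule.subset_span ⟨0, 1, p 0, hp 0, by norm_num⟩
    have g02 : (Pi.single 2 (f1 * p 1) - Pi.single 0 (f * p 1) : Fin 3 → R)
        ∈ kosB1 I ![f1, f2, f] d :=
      Submodule.subset_span ⟨0, 2, p 1, hp 1, by norm_num; rfl⟩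
    have g12 : (Pi.single 2 (f2 * p 2) - Pi.single 1 (f * p 2) : Fin 3 → R)
        ∈ kosB1 I ![f1, f2, f] d :=
      Submodule.subset_span ⟨1, 2, p 2, hp 2, by norm_num; rfl⟩
    have : psi f1 f2 f p =
        (Pi.single 1 (f1 * p 0) - Pi.single 0 (f2 * p 0))
        + (Pi.single 2 (f1 * p 1) - Pi.single 0 (f * p 1))
        + (Pi.single 2 (f2 * p 2) - Pi.single 1 (f * p 2)) := by
      funext i; fin_cases i <;> simp [psi, Pi.single] <;> ring
    rw [this]
    exact add_mem (add_mem g01 g02) g12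

end basic

section maps

/-- the ideal `(f1·I^{d-1} : f2) ∩ I^{d-1}` -/
noncomputable def AA1 (f1 f2 : R) (I : Ideal R) (d : ℕ) : Ideal R :=
  Submodule.colon (Ideal.span {f1} * I ^ (d - 1)) (Ideal.span {f2}) ⊓ I ^ (d - 1)

/-- first-component choice map: for `b ∈ AA1`, produce `![a, b, 0]` with
`a f1 + b f2 = 0`, `a ∈ I^{d-1}`. -/
noncomputable def gmap (f1 f2 f : R) (I : Ideal R) (d : ℕ)
    (hex : ∀ b : ↥(AA1 f1 f2 I d), ∃ a, a ∈ I ^ (d - 1) ∧ a * f1 + (b : R) * f2 = 0)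
    (huq : ∀ a ∈ I ^ (d - 1), a * f1 = 0 → a = 0) :
    ↥(AA1 f1 f2 I d) →ₗ[R] ↥(kosZ1 I ![f1, f2, f] d) where
  toFun b := ⟨![(hex b).choose, (b : R), 0], mem_kosZ1.2
    ⟨by
      intro j; fin_cases j
      · simpa using (hex b).choose_spec.1
      · simpa using b.2.2
      · simp,
     by simpa using (hex b).choose_spec.2⟩⟩
  map_add' b b' := by
    have key : (hex (b + b')).choose = (hex b).choose + (hex b').choose := by
      have h1 := (hex b).choose_spec
      have h2 := (hex b').choose_spec
      have h3 := (hex (b + b')).choose_spec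
      have hbb : ((b + b' : ↥(AA1 f1 f2 I d)) : R) = (b : R) + (b' : R) := rfl
      refine sub_eq_zero.mp (huq _ (sub_mem h3.1 (add_mem h1.1 h2.1)) ?_)
      linear_combination h3.2 - h1.2 - h2.2 - f2 * hbb
    ext i
    fin_cases i <;>
      simp [key, Submodule.coe_add]
  map_smul' c b := by
    have key : (hex (c • b)).choose = c * (hex b).choose := by
      have h1 := (hex b).choose_spec
      have h3 := (hex (c • b)).choose_spec
      have hc : ((c • b : ↥(AA1 f1 f2 I d)) : R) = c * (b : R) := rfl
      refine sub_eq_zero.mp (huq _ (sub_mem h3.1 (Ideal.mul_mem_left _ _ h1.1)) ?_)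
      linear_combination h3.2 - c * h1.2 - f2 * hc
    ext i
    fin_cases i <;>
      simp [key, smul_eq_mul]

end maps


set_option maxHeartbeats 2000000 in
theorem stmt8 {R : Type*} [CommRing R] [IsNoetherianRing R] [IsLocalRing R]
    (f1 f2 f : R) (h1 : f1 ∈ IsLocalRing.maximalIdeal R)
    (h2 : f2 ∈ IsLocalRing.maximalIdeal R) (hfm : f ∈ IsLocalRing.maximalIdeal R)
    (J I : Ideal R) (hJ : J = Ideal.span {f1, f2}) (hI : I = Ideal.span {f1, f2, f})
    (d : ℕ) (hd : 2 ≤ d)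
    (hann1 : Submodule.colon (⊥ : Ideal R) (Ideal.span {f1}) ⊓ I ^ (d - 2) = ⊥)
    (hann2 : Submodule.colon (⊥ : Ideal R) (Ideal.span {f1}) ⊓ I ^ (d - 1) = ⊥) :
    ∃ (α : idealQuot
            (Submodule.colon (Ideal.span {f1} * I ^ (d - 1)) (Ideal.span {f2}) ⊓ I ^ (d - 1))
            (Ideal.span {f} *
                (Submodule.colon (Ideal.span {f1} * I ^ (d - 2)) (Ideal.span {f2})
                  ⊓ I ^ (d - 2)) +
              Ideal.span {f1} * I ^ (d - 2)) →ₗ[R] kosH1 I ![f1, f2, f] d)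
      (β : kosH1 I ![f1, f2, f] d →ₗ[R]
          idealQuot (Submodule.colon (J * I ^ (d - 1)) (Ideal.span {f ^ d}))
            (Submodule.colon (J * I ^ (d - 2)) (Ideal.span {f ^ (d - 1)}))),
      Function.Injective α ∧ Function.Surjective β ∧
        LinearMap.range α = LinearMap.ker β := by
  classical
  -- basic memberships
  have hf1I : f1 ∈ I := by rw [hI]; exact Ideal.subset_span (by simp)
  have hf2I : f2 ∈ I := by rw [hI]; exact Ideal.subset_span (by simp)
  have hfI : f ∈ I := by rw [hI]; exact Ideal.subset_span (by simp)
  have hf1J : f1 ∈ J := by rw [hJ]; exact Ideal.subset_span (by simp)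
  have hf2J : f2 ∈ J := by rw [hJ]; exact Ideal.subset_span (by simp)
  have hJsup : J = span {f1} ⊔ span {f2} := by
    rw [hJ]; exact Ideal.span_insert f1 {f2}
  have hIsup : I = J ⊔ span {f} := by
    rw [hI, hJsup, Ideal.span_insert f1 {f2, f}, Ideal.span_insert f2 {f}, sup_assoc]
  have e21 : I ^ (d - 2) * I = I ^ (d - 1) := by
    rw [← pow_succ]; congr 1; omega
  have efd : f ^ (d - 1) * f = f ^ d := by
    rw [← pow_succ]; congr 1; omega
  have hfd1 : f ^ (d - 1) ∈ I ^ (d - 1) := pow_mem_pow hfI _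
  -- products land where they should
  have hmulE : ∀ x ∈ I ^ (d - 2), ∀ y ∈ I, x * y ∈ I ^ (d - 1) := by
    intro x hx y hy; rw [← e21]; exact Ideal.mul_mem_mul hx hy
  have hJE1 : ∀ y ∈ J, ∀ x ∈ I ^ (d - 1), x * y ∈ J * I ^ (d - 1) := by
    intro y hy x hx
    have h := Ideal.mul_mem_mul hy hx
    rwa [mul_comm y x] at h
  -- uniqueness from hann2
  have huq : ∀ a ∈ I ^ (d - 1), a * f1 = 0 → a = 0 := by
    intro a ha h0
    have hmem : a ∈ Submodule.colon (⊥ : Ideal R) (span {f1}) ⊓ I ^ (d - 1) :=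
      ⟨Submodule.mem_colon_span_singleton.2 (by simp [smul_eq_mul, h0]), ha⟩
    rw [hann2] at hmem
    simpa using hmem
  set Z := kosZ1 I ![f1, f2, f] d with hZdef
  set BB := Submodule.comap Z.subtype (kosB1 I ![f1, f2, f] d) with hBBdef
  -- existence for gmap
  have hex : ∀ b : ↥(AA1 f1 f2 I d), ∃ a, a ∈ I ^ (d - 1) ∧ a * f1 + (b : R) * f2 = 0 := by
    intro b
    have hb : (b : R) * f2 ∈ span {f1} * I ^ (d - 1) := by
      have := Submodule.mem_colon_span_singleton.1 b.2.1
      simpa [smul_eq_mul] using this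
    obtain ⟨y, hy, hxy⟩ := Ideal.mem_span_singleton_mul.1 hb
    exact ⟨-y, neg_mem hy, by linear_combination -hxy⟩
  set g := gmap f1 f2 f I d hex huq with hg
  have hchoose : ∀ (b : ↥(AA1 f1 f2 I d)) (a : R), a ∈ I ^ (d - 1) →
      a * f1 + (b : R) * f2 = 0 → (hex b).choose = a := by
    intro b a ha hs
    refine sub_eq_zero.mp (huq _ (sub_mem (hex b).choose_spec.1 ha) ?_)
    linear_combination (hex b).choose_spec.2 - hs
  have hg_apply : ∀ b, (g b : Fin 3 → R) = ![(hex b).choose, (b : R), 0] := fun b => rfl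
  -- boundaries are cycles
  have hBleZ : kosB1 I ![f1, f2, f] d ≤ Z := by
    rw [kosB1_eq]
    rintro v ⟨p, hp, rfl⟩
    replace hp := mem_cube.1 hp
    refine mem_kosZ1.2 ⟨?_, ?_⟩
    · intro j
      fin_cases j
      · show -(f2 * p 0) - f * p 1 ∈ _
        have : -(f2 * p 0) - f * p 1 = -(p 0 * f2 + p 1 * f) := by ring
        rw [this]
        exact neg_mem (add_mem (hmulE _ (hp 0) _ hf2I) (hmulE _ (hp 1) _ hfI))
      · show f1 * p 0 - f * p 2 ∈ _
        have : f1 * p 0 - f * p 2 = p 0 * f1 - p 2 * f := by ring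
        rw [this]
        exact sub_mem (hmulE _ (hp 0) _ hf1I) (hmulE _ (hp 2) _ hfI)
      · show f1 * p 1 + f2 * p 2 ∈ _
        have : f1 * p 1 + f2 * p 2 = p 1 * f1 + p 2 * f2 := by ring
        rw [this]
        exact add_mem (hmulE _ (hp 1) _ hf1I) (hmulE _ (hp 2) _ hf2I)
    · show (-(f2 * p 0) - f * p 1) * f1 + (f1 * p 0 - f * p 2) * f2
          + (f1 * p 1 + f2 * p 2) * f = 0
      ring
  set B1ideal : Ideal R := span {f} *
      (Submodule.colon (span {f1} * I ^ (d - 2)) (span {f2}) ⊓ I ^ (d - 2)) +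
      span {f1} * I ^ (d - 2) with hB1def
  -- the crucial two-sided characterization for alpha
  have hmemB1_iff : ∀ b : ↥(AA1 f1 f2 I d),
      ((g b : Fin 3 → R) ∈ kosB1 I ![f1, f2, f] d ↔ (b : R) ∈ B1ideal) := by
    intro b
    rw [kosB1_eq]
    constructor
    · rintro ⟨p, hp, hpsi⟩
      replace hp := mem_cube.1 hp
      have h1 := congrFun hpsi 1
      have h2 := congrFun hpsi 2
      simp only [hg_apply, psi, LinearMap.coe_mk, AddHom.coe_mk] at h1 h2
      norm_num at h1 h2
      -- h1 : f1 * p 0 - f * p 2 = b ; h2 : f1 * p 1 + f2 * p 2 = 0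
      have hb : (b : R) = f * (-p 2) + f1 * p 0 := by linear_combination -h1
      rw [hb, hB1def]
      refine add_mem (Submodule.mem_sup_left ?_) (Submodule.mem_sup_right ?_)
      · refine Ideal.mul_mem_mul (Ideal.mem_span_singleton_self f) ?_
        refine ⟨Submodule.mem_colon_span_singleton.2 ?_, neg_mem (hp 2)⟩
        rw [smul_eq_mul]
        exact Ideal.mem_span_singleton_mul.2 ⟨p 1, hp 1, by
          have h2' : f1 * p 1 + f2 * p 2 = 0 := h2
          linear_combination h2'⟩
      · exact Ideal.mem_span_singleton_mul.2 ⟨p 0, hp 0, rfl⟩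
    · intro hb
      rw [hB1def, Submodule.add_eq_sup] at hb
      obtain ⟨yy, hyy, ww, hww, hsum⟩ := Submodule.mem_sup.1 hb
      obtain ⟨c, hc, hfc⟩ := Ideal.mem_span_singleton_mul.1 hyy
      obtain ⟨u, hu, hf1u⟩ := Ideal.mem_span_singleton_mul.1 hww
      have hcf2 : c * f2 ∈ span {f1} * I ^ (d - 2) := by
        have := Submodule.mem_colon_span_singleton.1 hc.1
        simpa [smul_eq_mul] using this
      obtain ⟨e, he, hf1e⟩ := Ideal.mem_span_singleton_mul.1 hcf2
      have hbeq : (b : R) = f * c + f1 * u := by rw [← hsum, hfc, hf1u]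
      refine ⟨![u, e, -c], mem_cube.2 ?_, ?_⟩
      · intro j; fin_cases j
        · simpa using hu
        · simpa using he
        · simpa using neg_mem hc.2
      · rw [hg_apply]
        funext i
        fin_cases i
        · show -(f2 * u) - f * e = (hex b).choose
          refine (hchoose b _ ?_ ?_).symm
          · have hh : -(f2 * u) - f * e = -(u * f2 + e * f) := by ring
            rw [hh]
            exact neg_mem (add_mem (hmulE _ hu _ hf2I) (hmulE _ he _ hfI))
          · linear_combination f2 * hbeq - f * hf1e
        · show f1 * u - f * (-c) = (b : R)
          linear_combination -hbeq
        · show f1 * e + f2 * (-c) = 0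
          linear_combination hf1e
  -- construct alpha
  let prea : ↥(AA1 f1 f2 I d) →ₗ[R] (Z ⧸ BB) := BB.mkQ.comp g
  have hprea_apply : ∀ b, prea b = Submodule.Quotient.mk (g b) := fun _ => rfl
  have hker_a : Submodule.comap (AA1 f1 f2 I d).subtype (B1ideal : Submodule R R)
      ≤ LinearMap.ker prea := by
    intro b hbmem
    have : (b : R) ∈ B1ideal := hbmem
    rw [LinearMap.mem_ker, hprea_apply, Submodule.Quotient.mk_eq_zero]
    exact (hmemB1_iff b).2 this
  let alpha := Submodule.liftQ _ prea hker_a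
  have halpha_apply : ∀ b, alpha (Submodule.Quotient.mk b) = Submodule.Quotient.mk (g b) :=
    fun _ => rfl
  have halpha_inj : Function.Injective alpha := by
    rw [← LinearMap.ker_eq_bot, eq_bot_iff]
    intro x hx
    obtain ⟨b, rfl⟩ := Submodule.Quotient.mk_surjective _ x
    rw [LinearMap.mem_ker, halpha_apply, Submodule.Quotient.mk_eq_zero] at hx
    rw [Submodule.mem_bot, Submodule.Quotient.mk_eq_zero]
    exact (hmemB1_iff b).1 hx
    -- the ideal C and its quotient
  set CC : Ideal R := I ^ (d - 1) ⊓ Submodule.colon (J * I ^ (d - 1)) (span {f}) with hCCdef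
  set BC := Submodule.comap (Submodule.subtype (CC : Submodule R R))
      ((J * I ^ (d - 2) : Ideal R) : Submodule R R) with hBCdef
  have hcycle3 : ∀ z : ↥Z, (z : Fin 3 → R) 2 ∈ CC := by
    intro z
    obtain ⟨hcomps, hsum⟩ := mem_kosZ1.1 z.2
    refine ⟨hcomps 2, Submodule.mem_colon_span_singleton.2 ?_⟩
    rw [smul_eq_mul]
    have hh : (z : Fin 3 → R) 2 * f
        = -((z : Fin 3 → R) 0 * f1) + -((z : Fin 3 → R) 1 * f2) := by
      linear_combination hsum
    rw [hh]
    exact add_mem (neg_mem (hJE1 _ hf1J _ (hcomps 0))) (neg_mem (hJE1 _ hf2J _ (hcomps 1)))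
  let p3 : ↥Z →ₗ[R] ↥CC :=
    LinearMap.codRestrict (CC : Submodule R R)
      ((LinearMap.proj 2 : (Fin 3 → R) →ₗ[R] R).comp Z.subtype) hcycle3
  have hp3_apply : ∀ z : ↥Z, (p3 z : R) = (z : Fin 3 → R) 2 := fun _ => rfl
  let q3 : ↥Z →ₗ[R] (↥CC ⧸ BC) := BC.mkQ.comp p3
  have hq3_apply : ∀ z : ↥Z, q3 z = Submodule.Quotient.mk (p3 z) := fun _ => rfl
  have hq3_zero : ∀ z : ↥Z, (z : Fin 3 → R) 2 ∈ J * I ^ (d - 2) → q3 z = 0 := by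
    intro z hz
    rw [hq3_apply, Submodule.Quotient.mk_eq_zero]
    exact hz
  have hbd3 : ∀ v ∈ kosB1 I ![f1, f2, f] d, v 2 ∈ J * I ^ (d - 2) := by
    intro v hv
    rw [kosB1_eq] at hv
    obtain ⟨p, hp, rfl⟩ := hv
    replace hp := mem_cube.1 hp
    show f1 * p 1 + f2 * p 2 ∈ _
    exact add_mem (Ideal.mul_mem_mul hf1J (hp 1)) (Ideal.mul_mem_mul hf2J (hp 2))
  have hkerq3 : BB ≤ LinearMap.ker q3 := by
    intro z hz
    exact LinearMap.mem_ker.2 (hq3_zero z (hbd3 _ hz))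
  let beta1 : (↥Z ⧸ BB) →ₗ[R] (↥CC ⧸ BC) := Submodule.liftQ _ q3 hkerq3
  have hbeta1_apply : ∀ z, beta1 (Submodule.Quotient.mk z) = q3 z := fun _ => rfl
  -- surjectivity of beta1
  have hcycle_of : ∀ c : ↥CC, ∃ z : ↥Z, (z : Fin 3 → R) 2 = (c : R) := by
    intro c
    have hc1 : (c : R) ∈ I ^ (d - 1) := c.2.1
    have hc2 : (c : R) * f ∈ J * I ^ (d - 1) := by
      have := Submodule.mem_colon_span_singleton.1 c.2.2
      simpa [smul_eq_mul] using this
    rw [hJsup, Ideal.sup_mul] at hc2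
    obtain ⟨x, hx, y, hy, hxy⟩ := Submodule.mem_sup.1 hc2
    obtain ⟨a, ha, hfa⟩ := Ideal.mem_span_singleton_mul.1 hx
    obtain ⟨b', hb', hfb⟩ := Ideal.mem_span_singleton_mul.1 hy
    refine ⟨⟨![-a, -b', (c : R)], mem_kosZ1.2 ⟨?_, ?_⟩⟩, rfl⟩
    · intro j; fin_cases j
      · simpa using neg_mem ha
      · simpa using neg_mem hb'
      · simpa using hc1
    · show -a * f1 + -b' * f2 + (c : R) * f = 0
      rw [← hxy, ← hfa, ← hfb]; ring
  have hbeta1_surj : Function.Surjective beta1 := by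
    intro w
    obtain ⟨c, rfl⟩ := Submodule.Quotient.mk_surjective _ w
    obtain ⟨z, hz⟩ := hcycle_of c
    refine ⟨Submodule.Quotient.mk z, ?_⟩
    rw [hbeta1_apply, hq3_apply]
    congr 1
    exact Subtype.ext hz
  -- the isomorphism M3 ≃ CC/BC
  set A3 : Ideal R := Submodule.colon (J * I ^ (d - 1)) (span {f ^ d}) with hA3def
  set B3 : Ideal R := Submodule.colon (J * I ^ (d - 2)) (span {f ^ (d - 1)}) with hB3def
  have hphi_mem : ∀ r : ↥A3, (r : R) * f ^ (d - 1) ∈ CC := by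
    intro r
    constructor
    · exact Ideal.mul_mem_left _ _ hfd1
    · show (r : R) * f ^ (d - 1) ∈ Submodule.colon (J * I ^ (d - 1)) (span {f})
      refine Submodule.mem_colon_span_singleton.2 ?_
      rw [smul_eq_mul, mul_assoc, efd]
      have := Submodule.mem_colon_span_singleton.1 r.2
      simpa [smul_eq_mul] using this
  let phi0 : ↥A3 →ₗ[R] ↥CC :=
    LinearMap.codRestrict (CC : Submodule R R)
      ((LinearMap.mulRight R (f ^ (d - 1))).comp A3.subtype) hphi_mem
  have hphi0_apply : ∀ r : ↥A3, (phi0 r : R) = (r : R) * f ^ (d - 1) := fun _ => rfl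
  let phi : ↥A3 →ₗ[R] (↥CC ⧸ BC) := BC.mkQ.comp phi0
  have hphi_apply : ∀ r : ↥A3, phi r = Submodule.Quotient.mk (phi0 r) := fun _ => rfl
  have hkphi : Submodule.comap A3.subtype (B3 : Submodule R R) ≤ LinearMap.ker phi := by
    intro r hr
    rw [LinearMap.mem_ker, hphi_apply, Submodule.Quotient.mk_eq_zero]
    show (r : R) * f ^ (d - 1) ∈ J * I ^ (d - 2)
    have := Submodule.mem_colon_span_singleton.1 (show (r : R) ∈ B3 from hr)
    simpa [smul_eq_mul] using this
  let phiBar := Submodule.liftQ _ phi hkphi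
  have hphiBar_apply : ∀ r, phiBar (Submodule.Quotient.mk r) = phi r := fun _ => rfl
  have hphiBar_inj : Function.Injective phiBar := by
    rw [← LinearMap.ker_eq_bot, eq_bot_iff]
    intro x hx
    obtain ⟨r, rfl⟩ := Submodule.Quotient.mk_surjective _ x
    rw [LinearMap.mem_ker, hphiBar_apply, hphi_apply, Submodule.Quotient.mk_eq_zero] at hx
    rw [Submodule.mem_bot, Submodule.Quotient.mk_eq_zero]
    show (r : R) ∈ B3
    rw [hB3def]
    refine Submodule.mem_colon_span_singleton.2 ?_
    rw [smul_eq_mul]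
    exact hx
  -- the power decomposition
  have hpowdec : ∀ n : ℕ, I ^ (n + 1) ≤ J * I ^ n ⊔ span {f ^ (n + 1)} := by
    intro n
    induction n with
    | zero => simp [pow_one, Ideal.mul_top, ← hIsup]
    | succ n ih =>
      have step1 : I ^ (n + 2) = I ^ (n + 1) * I := by rw [← pow_succ]
      have step2 : I ^ (n + 1) * I ≤ (J * I ^ n ⊔ span {f ^ (n + 1)}) * I :=
        Ideal.mul_mono_left ih
      have step3 : (J * I ^ n ⊔ span {f ^ (n + 1)}) * I
          = J * I ^ n * I ⊔ span {f ^ (n + 1)} * I := Ideal.sup_mul _ _ _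
      have h1' : J * I ^ n * I = J * I ^ (n + 1) := by rw [mul_assoc, ← pow_succ]
      have h2' : span {f ^ (n + 1)} * I ≤ J * I ^ (n + 1) ⊔ span {f ^ (n + 2)} := by
        conv_lhs => rw [hIsup]
        rw [Ideal.mul_sup]
        apply sup_le
        · calc span {f ^ (n + 1)} * J ≤ I ^ (n + 1) * J :=
                Ideal.mul_mono_left (Ideal.span_le.2 (Set.singleton_subset_iff.2 (SetLike.mem_coe.2 (pow_mem_pow hfI _))))
            _ = J * I ^ (n + 1) := mul_comm _ _
            _ ≤ _ := le_sup_left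
        · rw [Ideal.span_singleton_mul_span_singleton, ← pow_succ]
          exact le_sup_right
      rw [step1]
      refine le_trans step2 ?_
      rw [step3, h1']
      exact sup_le (le_sup_left) (le_trans h2' (sup_le le_sup_left le_sup_right))
  have hdec : I ^ (d - 1) ≤ J * I ^ (d - 2) ⊔ span {f ^ (d - 1)} := by
    have h := hpowdec (d - 2)
    have hn : d - 2 + 1 = d - 1 := by omega
    rwa [hn] at h
  have hphiBar_surj : Function.Surjective phiBar := by
    intro w
    obtain ⟨c, rfl⟩ := Submodule.Quotient.mk_surjective _ w
    have hcd := hdec c.2.1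
    obtain ⟨jj, hjj, t, ht, hsum⟩ := Submodule.mem_sup.1 hcd
    obtain ⟨s, hts⟩ := Ideal.mem_span_singleton'.1 ht
    -- hts : s * f ^ (d-1) = t
    have hceq : (c : R) = jj + s * f ^ (d - 1) := by rw [← hsum, hts]
    have hcf : (c : R) * f ∈ J * I ^ (d - 1) := by
      have := Submodule.mem_colon_span_singleton.1 c.2.2
      simpa [smul_eq_mul] using this
    have hjf : jj * f ∈ J * I ^ (d - 1) := by
      have h := Ideal.mul_mem_mul hjj hfI
      rwa [mul_assoc, e21] at h
    have hsA3 : s ∈ A3 := by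
      rw [hA3def]
      refine Submodule.mem_colon_span_singleton.2 ?_
      rw [smul_eq_mul]
      have h5 : s * f ^ d = (c : R) * f - jj * f := by
        rw [← efd]; linear_combination (-f) * hceq
      rw [h5]; exact sub_mem hcf hjf
    refine ⟨Submodule.Quotient.mk ⟨s, hsA3⟩, ?_⟩
    rw [hphiBar_apply, hphi_apply, Submodule.Quotient.eq]
    show ((phi0 ⟨s, hsA3⟩ : R) - (c : R)) ∈ (J * I ^ (d - 2) : Ideal R)
    rw [hphi0_apply]
    have h6 : s * f ^ (d - 1) - (c : R) = -jj := by linear_combination -hceq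
    rw [h6]; exact neg_mem hjj
  let eIso : (↥A3 ⧸ Submodule.comap A3.subtype (B3 : Submodule R R)) ≃ₗ[R] (↥CC ⧸ BC) :=
    LinearEquiv.ofBijective phiBar ⟨hphiBar_inj, hphiBar_surj⟩
  have heIso_apply : ∀ x, (eIso x : ↥CC ⧸ BC) = phiBar x := fun _ => rfl
  let beta := (eIso.symm.toLinearMap).comp beta1
  have hbeta_apply : ∀ x, beta x = eIso.symm (beta1 x) := fun _ => rfl
  have hbeta_surj : Function.Surjective beta := by
    intro w
    obtain ⟨x, hx⟩ := hbeta1_surj (eIso w)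
    refine ⟨x, ?_⟩
    rw [hbeta_apply, hx]
    exact eIso.symm_apply_apply w
  -- exactness
  have hrange : LinearMap.range alpha = LinearMap.ker beta := by
    ext x
    simp only [LinearMap.mem_range, LinearMap.mem_ker]
    constructor
    · rintro ⟨y, rfl⟩
      obtain ⟨b, rfl⟩ := Submodule.Quotient.mk_surjective _ y
      rw [hbeta_apply, halpha_apply, hbeta1_apply]
      have h0' : (g b : Fin 3 → R) 2 = 0 := by rw [hg_apply]; simp
      rw [hq3_zero _ (by rw [h0']; exact zero_mem _), map_zero]
    · intro hx
      obtain ⟨z, rfl⟩ := Submodule.Quotient.mk_surjective _ x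
      have hb1 : beta1 (Submodule.Quotient.mk z) = 0 := by
        rw [hbeta_apply] at hx
        have h' := congrArg eIso hx
        rwa [eIso.apply_symm_apply, map_zero] at h'
      rw [hbeta1_apply, hq3_apply, Submodule.Quotient.mk_eq_zero] at hb1
      have hz2 : (z : Fin 3 → R) 2 ∈ J * I ^ (d - 2) := hb1
      rw [hJsup, Ideal.sup_mul] at hz2
      obtain ⟨x1, hx1, y1, hy1, hxy1⟩ := Submodule.mem_sup.1 hz2
      obtain ⟨p, hp, hf1p⟩ := Ideal.mem_span_singleton_mul.1 hx1
      obtain ⟨q, hq, hf2q⟩ := Ideal.mem_span_singleton_mul.1 hy1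
      have hbd : psi f1 f2 f ![0, p, q] ∈ kosB1 I ![f1, f2, f] d := by
        rw [kosB1_eq]
        refine ⟨![0, p, q], mem_cube.2 ?_, rfl⟩
        intro j; fin_cases j <;> simp [hp, hq]
      set v' : Fin 3 → R := (z : Fin 3 → R) - psi f1 f2 f ![0, p, q] with hv'
      have hv'Z : v' ∈ Z := sub_mem z.2 (hBleZ hbd)
      have hv2 : v' 2 = 0 := by
        show (z : Fin 3 → R) 2 - (psi f1 f2 f ![0, p, q]) 2 = 0
        show (z : Fin 3 → R) 2 - (f1 * p + f2 * q) = 0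
        rw [← hxy1, ← hf1p, ← hf2q]; ring
      obtain ⟨hv'comps, hv'sum⟩ := mem_kosZ1.1 hv'Z
      have hsum0 : v' 0 * f1 + v' 1 * f2 = 0 := by
        rw [hv2] at hv'sum
        linear_combination hv'sum
      have hb'A : v' 1 ∈ AA1 f1 f2 I d := by
        refine ⟨Submodule.mem_colon_span_singleton.2 ?_, hv'comps 1⟩
        rw [smul_eq_mul]
        exact Ideal.mem_span_singleton_mul.2 ⟨-(v' 0), neg_mem (hv'comps 0),
          by linear_combination -hsum0⟩
      refine ⟨Submodule.Quotient.mk ⟨v' 1, hb'A⟩, ?_⟩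
      rw [halpha_apply, Submodule.Quotient.eq]
      show ((g ⟨v' 1, hb'A⟩ : Fin 3 → R) - (z : Fin 3 → R)) ∈ kosB1 I ![f1, f2, f] d
      have hgv : (g ⟨v' 1, hb'A⟩ : Fin 3 → R) = v' := by
        rw [hg_apply]
        funext i
        fin_cases i
        · show (hex ⟨v' 1, hb'A⟩).choose = v' 0
          exact hchoose _ _ (hv'comps 0) (by linear_combination hsum0)
        · rfl
        · exact hv2.symm
      rw [hgv, hv']
      have hsub : (z : Fin 3 → R) - psi f1 f2 f ![0, p, q] - (z : Fin 3 → R)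
          = -(psi f1 f2 f ![0, p, q]) := by
        abel
      rw [hsub]
      exact neg_mem hbd
  exact ⟨alpha, beta, halpha_inj, hbeta_surj, hrange⟩
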